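/- For a ≥ 0.07 and b ∈ (0, 0.5), both g₁(a,b) = 216a³ - 36a²b² + 2ab⁴ + 36a²b - 4ab³ - 36a² + 6ab² - (1/4)b⁴ - 4ab + (1/2)b³ + 2a - (1/4)b² and g₂(a,b) = b² + 4a - b are strictly positive. -/
import Mathlib


theorem stmt_8 (a b : ℝ) (ha : 0.07 ≤ a) (hb1 : 0 < b) (hb2 : b < 0.5) :
    0 < 216 * a ^ 3 - 36 * a ^ 2 * b ^ 2 + 2 * a * b ^ 4 + 36 * a ^ 2 * b
        - 4 * a * b ^ 3 - 36 * a ^ 2 + 6 * a * b ^ 2 - (1 / 4) * b ^ 4 - 4 * a * b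
        + (1 / 2) * b ^ 3 + 2 * a - (1 / 4) * b ^ 2 ∧
    0 < b ^ 2 + 4 * a - b := by
  have hu : (0:ℝ) < 18 * a - b ^ 2 + b - 1 := by nlinarith
  have hu3 : (0:ℝ) < (18 * a - b ^ 2 + b - 1) ^ 3 := pow_pos hu 3
  constructor
  · nlinarith [hu3, sq_nonneg ((2 * b - 1) * (b - 2) * (b + 1))]
  · nlinarith [sq_nonneg (2 * b - 1)]
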